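/- Let ε > 0, let S ⊆ ℝ² be a nonempty finite set whose diameter is at most 2ε, and let K ⊆ ℝ² be a nonempty compact convex set such that a ball of radius ε slides freely inside K. Then V₂(conv(S) ⊕ K) − V₂(S ⊕ K) ≤ V₂(conv(S) ⊕ B(ε)) − V₂(S ⊕ B(ε)), where conv(S) denotes the convex hull of S. -/

import Mathlib

open Pointwise MeasureTheory Metric

noncomputable section

/-- The plane `ℝ²`. -/
abbrev E2 := EuclideanSpace ℝ (Fin 2)

/-- `V₂`: Lebesgue measure (area) of a subset of `ℝ²`, as a real number. -/
def V2 (A : Set E2) : ℝ := (volume A).toReal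

/-- A ball of radius `ε` slides freely inside `K` if every boundary point of `K`
is contained in a closed ball of radius `ε` that is contained in `K`. -/
def SlidesFreely (ε : ℝ) (K : Set E2) : Prop :=
  ∀ x ∈ frontier K, ∃ c : E2, x ∈ closedBall c ε ∧ closedBall c ε ⊆ K

namespace L1aux

open Set RealInnerProductSpace

/-! ### Planar linear algebra -/

/-- Rotation by 90 degrees. -/
def J (w : E2) : E2 := (WithLp.equiv 2 (Fin 2 → ℝ)).symm ![-(w 1), w 0]

lemma J_apply0 (w : E2) : J w 0 = -(w 1) := rfl
lemma J_apply1 (w : E2) : J w 1 = w 0 := rfl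

lemma inner_E2 (x y : E2) : ⟪x, y⟫ = x 0 * y 0 + x 1 * y 1 := by
  simp [PiLp.inner_apply, Fin.sum_univ_two]; ring

lemma normsq_E2 (x : E2) : ‖x‖ ^ 2 = x 0 ^ 2 + x 1 ^ 2 := by
  rw [← real_inner_self_eq_norm_sq]; rw [inner_E2]; ring

lemma norm_J (w : E2) : ‖J w‖ = ‖w‖ := by
  have h1 : ‖J w‖ ^ 2 = ‖w‖ ^ 2 := by
    rw [normsq_E2, normsq_E2, J_apply0, J_apply1]; ring
  nlinarith [norm_nonneg (J w), norm_nonneg w]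

lemma E2_ext {x y : E2} (h0 : x 0 = y 0) (h1 : x 1 = y 1) : x = y := by
  ext i; fin_cases i <;> assumption

lemma E2_ne_zero {w : E2} (hw : w ≠ 0) : w 0 ^ 2 + w 1 ^ 2 ≠ 0 := by
  intro h
  have h0 : w 0 = 0 := by nlinarith [sq_nonneg (w 0), sq_nonneg (w 1)]
  have h1 : w 1 = 0 := by nlinarith [sq_nonneg (w 0), sq_nonneg (w 1)]
  exact hw (E2_ext (by rw [h0]; rfl) (by rw [h1]; rfl))

/-- In the plane, a vector orthogonal to a nonzero vector `w` is a multiple of `J w`. -/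
lemma ortho2 {w v : E2} (hw : w ≠ 0) (h : ⟪w, v⟫ = 0) : ∃ t : ℝ, v = t • J w := by
  rw [inner_E2] at h
  refine ⟨(w 0 * v 1 - w 1 * v 0) / (w 0 ^ 2 + w 1 ^ 2), E2_ext ?_ ?_⟩
  · show v 0 = _ * J w 0
    rw [J_apply0]; field_simp [E2_ne_zero hw]; linear_combination (w 0) * h
  · show v 1 = _ * J w 1
    rw [J_apply1]; field_simp [E2_ne_zero hw]; linear_combination (w 1) * h

/-- Cauchy-Schwarz equality case used twice. -/
lemma cs_eq {v u : E2} {r : ℝ} (hu : ‖u‖ = 1) (hr : 0 ≤ r) (hn : ‖v‖ ≤ r)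
    (hi : ⟪v, u⟫ ≤ -r) : v = -(r • u) := by
  have he : ‖v + r • u‖ ^ 2 = ‖v‖ ^ 2 + 2 * r * ⟪v, u⟫ + r ^ 2 * ‖u‖ ^ 2 := by
    rw [← real_inner_self_eq_norm_sq, ← real_inner_self_eq_norm_sq, ← real_inner_self_eq_norm_sq]
    rw [inner_add_add_self, real_inner_smul_left, real_inner_smul_right, real_inner_smul_left,
      real_inner_smul_right, real_inner_comm u v]
    ring
  have h2 : ‖v + r • u‖ ^ 2 ≤ 0 := by
    rw [he, hu]; nlinarith [norm_nonneg v, sq_nonneg (‖v‖ - r)]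
  have h3 : v + r • u = 0 := by
    have h4 := norm_nonneg (v + r • u)
    have h0 : ‖v + r • u‖ = 0 := by nlinarith
    exact norm_eq_zero.1 h0
  linear_combination (norm := module) h3

/-! ### Nearest-point projection onto a closed convex set -/

open Classical in
/-- Nearest point projection onto `C`. -/
def pp (C : Set E2) (y : E2) : E2 :=
  if h : ∃ v ∈ C, ‖y - v‖ = ⨅ w : C, ‖y - w‖ then h.choose else y

section pp
variable {C : Set E2}

lemma pp_spec (hne : C.Nonempty) (hcl : IsClosed C) (hco : Convex ℝ C) (y : E2) :
    pp C y ∈ C ∧ ‖y - pp C y‖ = ⨅ w : C, ‖y - w‖ := by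
  have h : ∃ v ∈ C, ‖y - v‖ = ⨅ w : C, ‖y - w‖ :=
    exists_norm_eq_iInf_of_complete_convex hne hcl.isComplete hco y
  rw [pp, dif_pos h]
  exact ⟨h.choose_spec.1, h.choose_spec.2⟩

lemma pp_mem (hne : C.Nonempty) (hcl : IsClosed C) (hco : Convex ℝ C) (y : E2) :
    pp C y ∈ C := (pp_spec hne hcl hco y).1

lemma pp_inner (hne : C.Nonempty) (hcl : IsClosed C) (hco : Convex ℝ C) (y : E2) :
    ∀ w ∈ C, ⟪y - pp C y, w - pp C y⟫ ≤ 0 :=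
  (norm_eq_iInf_iff_real_inner_le_zero hco (pp_mem hne hcl hco y)).1 (pp_spec hne hcl hco y).2

lemma pp_dist (hne : C.Nonempty) (hcl : IsClosed C) (hco : Convex ℝ C) (y : E2) :
    ‖y - pp C y‖ = infDist y C := by
  rw [(pp_spec hne hcl hco y).2, Metric.infDist_eq_iInf]
  simp only [dist_eq_norm]

lemma pp_self (hne : C.Nonempty) (hcl : IsClosed C) (hco : Convex ℝ C) {y : E2} (hy : y ∈ C) :
    pp C y = y := by
  have h := pp_dist hne hcl hco y
  rw [Metric.infDist_zero_of_mem hy] at h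
  have h2 := norm_eq_zero.1 h
  have h3 : y = pp C y := by linear_combination (norm := module) h2
  exact h3.symm

lemma pp_lip (hne : C.Nonempty) (hcl : IsClosed C) (hco : Convex ℝ C) (y z : E2) :
    ‖pp C y - pp C z‖ ≤ ‖y - z‖ := by
  set a := pp C y with ha
  set b := pp C z with hb
  have h1 := pp_inner hne hcl hco y b (pp_mem hne hcl hco z)
  have h2 := pp_inner hne hcl hco z a (pp_mem hne hcl hco y)
  have e1 : (y - z) - (a - b) = (y - a) - (z - b) := by abel
  have e2 : ⟪(y - a) - (z - b), a - b⟫ = ⟪y - z, a - b⟫ - ‖a - b‖ ^ 2 := by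
    rw [← e1]
    conv_lhs => rw [inner_sub_left]
    rw [real_inner_self_eq_norm_sq]
  have e3 : ⟪(y - a) - (z - b), a - b⟫ = -⟪y - a, b - a⟫ - ⟪z - b, a - b⟫ := by
    rw [inner_sub_left, show (b - a : E2) = -(a - b) by abel, inner_neg_right]
    ring
  have key : ‖a - b‖ ^ 2 ≤ ⟪y - z, a - b⟫ := by
    have := e2.symm.trans e3
    linarith
  have hcs := real_inner_le_norm (y - z) (a - b)
  nlinarith [norm_nonneg (a - b), norm_nonneg (y - z)]

lemma pp_cont (hne : C.Nonempty) (hcl : IsClosed C) (hco : Convex ℝ C) :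
    Continuous (pp C) := by
  refine (LipschitzWith.of_dist_le_mul (K := 1) fun x y => ?_).continuous
  rw [dist_eq_norm, dist_eq_norm, NNReal.coe_one, one_mul]
  exact pp_lip hne hcl hco x y

lemma infDist_pos_of_not_mem (hne : C.Nonempty) (hcl : IsClosed C) (hco : Convex ℝ C)
    {y : E2} (hy : y ∉ C) : 0 < infDist y C := by
  rcases (infDist_nonneg (s := C) (x := y)).lt_or_eq with h | h
  · exact h
  · exfalso
    have h2 := pp_dist hne hcl hco y
    rw [← h] at h2
    have h3 := norm_eq_zero.1 h2
    have h4 : y = pp C y := by linear_combination (norm := module) h3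
    exact hy (h4 ▸ pp_mem hne hcl hco y)

/-- Membership in `C + closedBall 0 ε` via `infDist`. -/
lemma mem_add_cball_iff (hne : C.Nonempty) (hcl : IsClosed C) (hco : Convex ℝ C)
    {ε : ℝ} (hε : 0 ≤ ε) (y : E2) :
    y ∈ C + closedBall (0 : E2) ε ↔ infDist y C ≤ ε := by
  constructor
  · rintro ⟨c, hc, b, hb, rfl⟩
    rw [mem_closedBall_zero_iff] at hb
    calc infDist (c + b) C ≤ dist (c + b) c := infDist_le_dist_of_mem hc
    _ = ‖b‖ := by rw [dist_eq_norm]; congr 1; abel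
    _ ≤ ε := hb
  · intro h
    refine ⟨pp C y, pp_mem hne hcl hco y, y - pp C y, ?_, by module⟩
    rw [mem_closedBall_zero_iff, pp_dist hne hcl hco y]
    exact h

/-- A supporting direction at a frontier point of a closed convex set. -/
lemma supp_dir (hne : C.Nonempty) (hcl : IsClosed C) (hco : Convex ℝ C) {z : E2}
    (hz : z ∈ frontier C) :
    ∃ u : E2, ‖u‖ = 1 ∧ ∀ c ∈ C, ⟪c, u⟫ ≤ ⟪z, u⟫ := by
  have hzC : z ∈ C := hcl.frontier_subset hz
  have hzc : z ∈ closure Cᶜ := by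
    rw [frontier_eq_closure_inter_closure] at hz; exact hz.2
  obtain ⟨x, hxC, hxz⟩ := mem_closure_iff_seq_limit.1 hzc
  have hd : ∀ n, 0 < ‖x n - pp C (x n)‖ := by
    intro n
    rw [pp_dist hne hcl hco]
    exact infDist_pos_of_not_mem hne hcl hco (hxC n)
  set v : ℕ → E2 := fun n => ‖x n - pp C (x n)‖⁻¹ • (x n - pp C (x n)) with hv
  have hv1 : ∀ n, ‖v n‖ = 1 := by
    intro n
    rw [hv]
    simp only [norm_smul, norm_inv, norm_norm]
    exact inv_mul_cancel₀ (hd n).ne'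
  have hvs : ∀ n, v n ∈ sphere (0 : E2) 1 := fun n => by
    rw [mem_sphere, dist_zero_right]; exact hv1 n
  obtain ⟨u, hus, φ, hφ, hlim⟩ := (isCompact_sphere (0 : E2) 1).tendsto_subseq hvs
  have hu1 : ‖u‖ = 1 := by rwa [mem_sphere, dist_zero_right] at hus
  refine ⟨u, hu1, fun c hc => ?_⟩
  have hineq : ∀ n, ⟪c, v n⟫ ≤ ⟪pp C (x n), v n⟫ := by
    intro n
    have h1 := pp_inner hne hcl hco (x n) c hc
    have h2 : ⟪c - pp C (x n), v n⟫ ≤ 0 := by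
      rw [hv]
      rw [real_inner_smul_right]
      have : ⟪c - pp C (x n), x n - pp C (x n)⟫ ≤ 0 := by
        rw [real_inner_comm]; exact h1
      exact mul_nonpos_of_nonneg_of_nonpos (inv_nonneg.2 (norm_nonneg _)) this
    rw [inner_sub_left] at h2
    linarith
  have hpp : Filter.Tendsto (fun n => pp C (x (φ n))) Filter.atTop (nhds z) := by
    have : Filter.Tendsto (fun n => pp C (x n)) Filter.atTop (nhds (pp C z)) :=
      ((pp_cont hne hcl hco).tendsto z).comp hxz
    rw [pp_self hne hcl hco hzC] at this
    exact this.comp hφ.tendsto_atTop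
  have hl1 : Filter.Tendsto (fun n => ⟪c, v (φ n)⟫) Filter.atTop (nhds ⟪c, u⟫) :=
    Filter.Tendsto.inner tendsto_const_nhds hlim
  have hl2 : Filter.Tendsto (fun n => ⟪pp C (x (φ n)), v (φ n)⟫) Filter.atTop (nhds ⟪z, u⟫) :=
    Filter.Tendsto.inner hpp hlim
  exact le_of_tendsto_of_tendsto' hl1 hl2 fun n => hineq (φ n)

end pp

/-- Segment from inside to outside a closed set crosses the frontier. -/
lemma cross {X : Set E2} (hcl : IsClosed X) {p r : E2}
    (hp : p ∈ X) (hr : r ∉ X) : ∃ z, z ∈ segment ℝ p r ∧ z ∈ frontier X := by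
  set γ : ℝ → E2 := fun t => p + t • (r - p) with hγ
  have hγc : Continuous γ := by fun_prop
  set T : Set ℝ := Set.Icc (0 : ℝ) 1 ∩ γ ⁻¹' X with hT
  have hTne : (0 : ℝ) ∈ T := by
    constructor
    · exact Set.mem_Icc.2 ⟨le_refl 0, zero_le_one⟩
    · show γ 0 ∈ X
      simpa [hγ] using hp
  have hTcl : IsClosed T := (isClosed_Icc).inter (hcl.preimage hγc)
  have hTcomp : IsCompact T := isCompact_Icc.of_isClosed_subset hTcl Set.inter_subset_left
  set t₀ := sSup T with ht₀
  have ht₀T : t₀ ∈ T := hTcomp.sSup_mem ⟨0, hTne⟩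
  have ht₀1 : t₀ < 1 := by
    rcases lt_or_eq_of_le ht₀T.1.2 with h | h
    · exact h
    · exfalso
      apply hr
      have := ht₀T.2
      rw [h] at this
      simpa [hγ] using this
  refine ⟨γ t₀, ?_, ?_⟩
  · rw [segment_eq_image']
    exact ⟨t₀, ht₀T.1, rfl⟩
  · rw [frontier_eq_closure_inter_closure]
    constructor
    · exact subset_closure ht₀T.2
    · apply mem_closure_iff_seq_limit.2
      refine ⟨fun n => γ (t₀ + (1 - t₀) / (n + 1)), fun n => ?_, ?_⟩
      · intro hmem
        have h1t : (0:ℝ) < 1 - t₀ := by linarith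
        have hpos : 0 < (1 - t₀) / (n + 1 : ℝ) := by positivity
        have h1 : t₀ + (1 - t₀) / (n + 1) ≤ 1 := by
          have hh : (1 - t₀) / (n + 1 : ℝ) ≤ 1 - t₀ := by
            apply div_le_self h1t.le
            have : (0:ℝ) ≤ (n:ℝ) := Nat.cast_nonneg n
            linarith
          linarith
        have hmemT : t₀ + (1 - t₀) / (n + 1) ∈ T :=
          ⟨Set.mem_Icc.2 ⟨by linarith [ht₀T.1.1], h1⟩, hmem⟩
        have := le_csSup hTcomp.isBounded.bddAbove hmemT
        linarith
      · have : Filter.Tendsto (fun n : ℕ => t₀ + (1 - t₀) / (n + 1)) Filter.atTop (nhds t₀) := by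
          have h0 : Filter.Tendsto (fun n : ℕ => (1 - t₀) / (n + 1)) Filter.atTop (nhds 0) := by
            apply Filter.Tendsto.const_div_atTop
            exact Filter.tendsto_atTop_add_const_right _ _ tendsto_natCast_atTop_atTop
          simpa using tendsto_const_nhds.add h0
        exact (hγc.tendsto t₀).comp this

/-- A preconnected subset of a finite set is a subsingleton. -/
lemma finprec {s F : Set E2} (hs : IsPreconnected s) (hF : F.Finite) (hsub : s ⊆ F) :
    s.Subsingleton := by
  classical
  intro a ha b hb
  by_contra hab
  have hdab : 0 < dist b a := by
    rw [dist_pos]; exact fun h => hab (h ▸ rfl)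
  set F' : Finset ℝ := (hF.toFinset.image (fun p => dist p a)).filter (0 < ·) with hF'
  have hbF' : dist b a ∈ F' := by
    rw [hF', Finset.mem_filter]
    exact ⟨Finset.mem_image_of_mem _ (hF.mem_toFinset.2 (hsub hb)), hdab⟩
  set d₀ := F'.min' ⟨_, hbF'⟩ with hd₀
  have hd₀pos : 0 < d₀ := (Finset.mem_filter.1 (F'.min'_mem ⟨_, hbF'⟩)).2
  set δ := d₀ / 2 with hδ
  have hδpos : 0 < δ := by positivity
  have key : ∀ p ∈ s, dist p a < δ ∨ δ < dist p a := by
    intro p hp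
    rcases eq_or_ne p a with rfl | hpa
    · left; simpa using hδpos
    · right
      have : dist p a ∈ F' := by
        rw [hF', Finset.mem_filter]
        refine ⟨Finset.mem_image_of_mem _ (hF.mem_toFinset.2 (hsub hp)), ?_⟩
        rw [dist_pos]; exact hpa
      have := F'.min'_le _ this
      rw [hδ]; linarith
  have := hs {y | dist y a < δ} {y | δ < dist y a}
    (isOpen_lt (continuous_id.dist continuous_const) continuous_const)
    (isOpen_lt continuous_const (continuous_id.dist continuous_const))
    (fun p hp => key p hp)
    ⟨a, ha, by simp [hδpos]⟩
    ⟨b, hb, by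
      rcases key b hb with h | h
      · exfalso
        have hd := F'.min'_le _ hbF'
        rw [hδ] at h; linarith
      · exact h⟩
  obtain ⟨y, -, hy1, hy2⟩ := this
  have hy1' : dist y a < δ := hy1
  have hy2' : δ < dist y a := hy2
  linarith

/-! ### The frontier of the hull is covered by the balls -/

lemma frontier_hull_sub {S : Set E2} {ε : ℝ} (hS : S.Finite) (hSne : S.Nonempty)
    (hdiam : Metric.diam S ≤ 2 * ε) (hε : 0 < ε) :
    frontier (convexHull ℝ S) ⊆ S + closedBall (0 : E2) ε := by
  classical
  set C := convexHull ℝ S with hC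
  have hCcl : IsClosed C := (hS.isCompact_convexHull ℝ).isClosed
  have hCco : Convex ℝ C := convex_convexHull ℝ S
  have hCne : C.Nonempty := hSne.mono (subset_convexHull ℝ S)
  intro z hz
  have hzC : z ∈ C := hCcl.frontier_subset hz
  by_contra hzA
  have hfar : ∀ s ∈ S, ε < ‖z - s‖ := by
    intro s hs
    by_contra hle
    push_neg at hle
    exact hzA ⟨s, hs, z - s, by rwa [mem_closedBall_zero_iff], by module⟩
  obtain ⟨u, hu1, hsup⟩ := supp_dir hCne hCcl hCco hz
  have hu0 : u ≠ 0 := fun h => by simp [h] at hu1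
  set F := hS.toFinset with hF
  have hzC' : z ∈ convexHull ℝ (F : Set E2) := by rwa [hF, hS.coe_toFinset]
  obtain ⟨w, hw0, hw1, hwz⟩ := Finset.mem_convexHull'.1 hzC'
  -- All supporting weights concentrate on the supporting line
  have hterm0 : ∀ y ∈ F, w y * ⟪z - y, u⟫ = 0 := by
    have hsum : ∑ y ∈ F, w y * ⟪z - y, u⟫ = 0 := by
      have e1 : ∀ y ∈ F, w y * ⟪z - y, u⟫ = w y * ⟪z, u⟫ - ⟪w y • y, u⟫ := by
        intro y _
        rw [inner_sub_left, real_inner_smul_left]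
        ring
      rw [Finset.sum_congr rfl e1, Finset.sum_sub_distrib, ← Finset.sum_mul, ← sum_inner, hw1,
        hwz, one_mul, sub_self]
    intro y hy
    refine (Finset.sum_eq_zero_iff_of_nonneg fun i hi => ?_).1 hsum y hy
    have h1 : (0:ℝ) ≤ ⟪z - i, u⟫ := by
      have := hsup i (subset_convexHull ℝ S (hS.mem_toFinset.1 hi))
      rw [inner_sub_left]; linarith
    exact mul_nonneg (hw0 i hi) h1
  set t : E2 → ℝ := fun y => ⟪z - y, J u⟫ with ht
  have hrep : ∀ y ∈ F, w y ≠ 0 → z - y = t y • J u := by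
    intro y hy hwy
    have h0 : ⟪u, z - y⟫ = 0 := by
      rw [real_inner_comm]
      rcases mul_eq_zero.1 (hterm0 y hy) with h | h
      · exact absurd h hwy
      · exact h
    obtain ⟨τ, hτ⟩ := ortho2 hu0 h0
    have hJn : ‖J u‖ = 1 := by rw [norm_J, hu1]
    have he : t y = τ := by
      rw [ht]
      simp only [hτ, real_inner_smul_left]
      rw [real_inner_self_eq_norm_sq, hJn]
      ring
    rw [he]
    exact hτ
  have htlarge : ∀ y ∈ F, w y ≠ 0 → ε < |t y| := by
    intro y hy hwy
    have h := hrep y hy hwy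
    have hn : ‖z - y‖ = |t y| := by
      rw [h, norm_smul, norm_J, hu1, mul_one, Real.norm_eq_abs]
    have := hfar y (hS.mem_toFinset.1 hy)
    rwa [hn] at this
  have hsumt : ∑ y ∈ F, w y * t y = 0 := by
    have e : ∀ y ∈ F, w y * t y = ⟪w y • (z - y), J u⟫ := by
      intro y _
      rw [real_inner_smul_left]
    rw [Finset.sum_congr rfl e, ← sum_inner]
    have e2 : ∑ y ∈ F, w y • (z - y) = (∑ y ∈ F, w y) • z - ∑ y ∈ F, w y • y := by
      rw [Finset.sum_smul, ← Finset.sum_sub_distrib]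
      exact Finset.sum_congr rfl fun y _ => smul_sub _ _ _
    rw [e2, hw1, hwz, one_smul, sub_self, inner_zero_left]
  have hex : ∃ y ∈ F, 0 < w y := by
    by_contra hno
    push_neg at hno
    have : ∑ y ∈ F, w y = 0 :=
      Finset.sum_eq_zero fun y hy => le_antisymm (hno y hy) (hw0 y hy)
    rw [hw1] at this
    exact one_ne_zero this
  -- a positive-weight vertex on each side of the line
  have hside : ∀ sgn : Bool, ∃ y ∈ F, 0 < w y ∧ ε < (if sgn then t y else -(t y)) := by
    intro sgn
    by_contra hno
    push_neg at hno
    obtain ⟨y₀, hy₀, hwy₀⟩ := hex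
    set τ : E2 → ℝ := fun y => if sgn then t y else -(t y) with hτdef
    have habs : ∀ y, |τ y| = |t y| := by
      intro y
      rw [hτdef]
      rcases sgn with _ | _ <;> simp [abs_neg]
    have hneg : ∀ y ∈ F, 0 < w y → w y * τ y < 0 := by
      intro y hy hwy
      have h2 : ε < |τ y| := by rw [habs]; exact htlarge y hy hwy.ne'
      have h3 : τ y ≤ ε := hno y hy hwy
      have h4 : τ y < -ε := by
        rcases lt_abs.1 h2 with h | h
        · linarith
        · linarith
      exact mul_neg_of_pos_of_neg hwy (by linarith)
    have hle : ∀ y ∈ F, w y * τ y ≤ 0 := by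
      intro y hy
      rcases (hw0 y hy).lt_or_eq with h | h
      · exact (hneg y hy h).le
      · rw [← h, zero_mul]
    have hlt : ∑ y ∈ F, w y * τ y < 0 := by
      calc ∑ y ∈ F, w y * τ y < ∑ _y ∈ F, (0:ℝ) :=
        Finset.sum_lt_sum (fun y hy => hle y hy) ⟨y₀, hy₀, hneg y₀ hy₀ hwy₀⟩
      _ = 0 := Finset.sum_const_zero
    have hFsum : ∑ y ∈ F, w y * τ y = 0 := by
      rw [hτdef]
      rcases sgn with _ | _
      · simp only [Bool.false_eq_true, if_false, mul_neg, Finset.sum_neg_distrib, hsumt, neg_zero]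
      · simpa using hsumt
    rw [hFsum] at hlt
    exact lt_irrefl _ hlt
  obtain ⟨yp, hyp, hwp, htp⟩ := hside true
  obtain ⟨ym, hym, hwm, htm⟩ := hside false
  rw [if_pos rfl] at htp
  rw [if_neg (by simp)] at htm
  -- the two vertices are too far apart
  have hd : yp - ym = (t ym - t yp) • J u := by
    have h1 := hrep yp hyp hwp.ne'
    have h2 := hrep ym hym hwm.ne'
    have : yp - ym = (z - ym) - (z - yp) := by abel
    rw [this, h1, h2, sub_smul]
  have hdist : dist yp ym = t yp - t ym := by
    rw [dist_eq_norm, hd, norm_smul, norm_J, hu1, mul_one, Real.norm_eq_abs,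
      abs_of_nonpos (by linarith)]
    ring
  have hb := Metric.dist_le_diam_of_mem hS.isBounded (hS.mem_toFinset.1 hyp)
    (hS.mem_toFinset.1 hym)
  rw [hdist] at hb
  linarith

/-! ### Decomposition of a set with a freely sliding ball -/

def icore (K : Set E2) (ε : ℝ) : Set E2 := {c : E2 | closedBall c ε ⊆ K}

lemma dist_seg {x w zz : E2} (hzz : zz ∈ segment ℝ x w) : dist x zz ≤ dist x w := by
  rw [segment_eq_image'] at hzz
  obtain ⟨θ, hθ, rfl⟩ := hzz
  rw [dist_eq_norm, dist_eq_norm]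
  have : x - (x + θ • (w - x)) = -(θ • (w - x)) := by abel
  rw [this, norm_neg, norm_smul, Real.norm_eq_abs, abs_of_nonneg hθ.1]
  have h1 : ‖w - x‖ = ‖x - w‖ := norm_sub_rev _ _
  nlinarith [norm_nonneg (w - x), hθ.2]

lemma seg_eq_end {x w zz : E2} (hzz : zz ∈ segment ℝ x w) (hw : x ≠ w)
    (hd : dist x w ≤ dist x zz) : zz = w := by
  rw [segment_eq_image'] at hzz
  obtain ⟨θ, hθ, rfl⟩ := hzz
  have hθ1 : θ = 1 := by
    rw [dist_eq_norm, dist_eq_norm] at hd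
    have e : x - (x + θ • (w - x)) = -(θ • (w - x)) := by abel
    rw [e, norm_neg, norm_smul, Real.norm_eq_abs, abs_of_nonneg hθ.1] at hd
    have h1 : ‖x - w‖ = ‖w - x‖ := norm_sub_rev _ _
    have h2 : 0 < ‖w - x‖ := by
      rw [norm_pos_iff, sub_ne_zero]
      exact fun h => hw h.symm
    nlinarith [hθ.2]
  subst hθ1
  show x + (1:ℝ) • (w - x) = w
  rw [one_smul]
  abel

lemma Kdecomp {K : Set E2} {ε : ℝ} (hε : 0 < ε) (hKne : K.Nonempty) (hKc : IsCompact K)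
    (hKco : Convex ℝ K) (hsl : SlidesFreely ε K) :
    K = icore K ε + closedBall (0 : E2) ε ∧ (icore K ε).Nonempty ∧ Convex ℝ (icore K ε) ∧
      IsCompact (icore K ε) := by
  set L := icore K ε with hLdef
  have hLsub : L ⊆ K := fun c hc => hc (mem_closedBall_self hε.le)
  have hLco : Convex ℝ L := by
    intro c hc c' hc' a b ha hb hab
    intro w hw
    have he : ‖w - (a • c + b • c')‖ ≤ ε := by
      have := mem_closedBall.1 hw
      rwa [dist_eq_norm] at this
    set e := w - (a • c + b • c') with hedef
    have h1 : c + e ∈ K := hc (by rw [mem_closedBall_iff_norm]; simpa using he)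
    have h2 : c' + e ∈ K := hc' (by rw [mem_closedBall_iff_norm]; simpa using he)
    have h3 : a • (c + e) + b • (c' + e) ∈ K := hKco h1 h2 ha hb hab
    have h4 : a • (c + e) + b • (c' + e) = w := by
      have : a • (c + e) + b • (c' + e) = a • c + b • c' + (a + b) • e := by module
      rw [this, hab, one_smul, hedef]
      abel
    rwa [h4] at h3
  have hLcl : IsClosed L := by
    have hLeq : L = ⋂ e ∈ closedBall (0 : E2) ε, (· + e) ⁻¹' K := by
      ext c
      simp only [Set.mem_iInter, Set.mem_preimage]
      constructor
      · intro hc e he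
        exact hc (by rw [mem_closedBall_iff_norm]; simpa using mem_closedBall_zero_iff.1 he)
      · intro h w hw
        have h2 := h (w - c) (by
          rw [mem_closedBall_zero_iff, ← dist_eq_norm]
          exact mem_closedBall.1 hw)
        simpa using h2
    rw [hLeq]
    exact isClosed_biInter fun e _ => hKc.isClosed.preimage (continuous_add_right e)
  have hLcomp : IsCompact L :=
    isCompact_of_isClosed_isBounded hLcl (hKc.isBounded.subset hLsub)
  -- the frontier of K is nonempty
  obtain ⟨k₀, hk₀⟩ := id hKne
  obtain ⟨R, hR⟩ := hKc.isBounded.subset_closedBall (0 : E2)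
  have hqK : (|R| + 1) • EuclideanSpace.single (0 : Fin 2) (1 : ℝ) ∉ K := by
    intro hq
    have := hR hq
    rw [mem_closedBall_zero_iff, norm_smul, EuclideanSpace.norm_single] at this
    simp only [norm_one, mul_one, Real.norm_eq_abs] at this
    have h1 : |(|R| + 1)| = |R| + 1 := abs_of_nonneg (by positivity)
    rw [h1] at this
    have := le_abs_self R
    linarith
  obtain ⟨y₀, -, hy₀f⟩ := cross hKc.isClosed hk₀ hqK
  obtain ⟨c₀, -, hc₀K⟩ := hsl y₀ hy₀f
  have hLne : L.Nonempty := ⟨c₀, hc₀K⟩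
  refine ⟨?_, hLne, hLco, hLcomp⟩
  apply Set.Subset.antisymm
  · -- K ⊆ L + ball
    intro x hx
    set FK := frontier K with hFK
    have hFKc : IsCompact FK :=
      hKc.of_isClosed_subset isClosed_frontier hKc.isClosed.frontier_subset
    obtain ⟨y, hyF, hyd⟩ := hFKc.exists_infDist_eq_dist ⟨y₀, hy₀f⟩ x
    set d := infDist x FK with hd
    have hd0 : 0 ≤ d := infDist_nonneg
    by_cases hcase : ε ≤ d
    · refine ⟨x, ?_, 0, mem_closedBall_self hε.le, by show x + 0 = x; rw [add_zero]⟩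
      intro v hv
      by_contra hvK
      have hvx : x ≠ v := fun h => hvK (h ▸ hx)
      obtain ⟨zz, hzseg, hzf⟩ := cross hKc.isClosed hx hvK
      have h1 : d ≤ dist x zz := infDist_le_dist_of_mem hzf
      have h2 : dist x v ≤ ε := by
        rw [dist_comm]; exact mem_closedBall.1 hv
      have h3 : dist x zz ≤ dist x v := dist_seg hzseg
      have h4 : zz = v := seg_eq_end hzseg hvx (by linarith)
      exact hvK (h4 ▸ hKc.isClosed.frontier_subset hzf)
    · push_neg at hcase
      obtain ⟨u, hu1, hsup⟩ := supp_dir hKne hKc.isClosed hKco hyF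
      have hball : ∀ w : E2, dist w x < d → w ∈ K := by
        intro w hw
        by_contra hwK
        obtain ⟨zz, hzseg, hzf⟩ := cross hKc.isClosed hx hwK
        have h1 : d ≤ dist x zz := infDist_le_dist_of_mem hzf
        have h3 : dist x zz ≤ dist x w := dist_seg hzseg
        rw [dist_comm w x] at hw
        linarith
      have hgap : ⟪x, u⟫ + d ≤ ⟪y, u⟫ := by
        have hstep : ∀ t : ℝ, 0 ≤ t → t < d → ⟪x, u⟫ + t ≤ ⟪y, u⟫ := by
          intro t ht htd
          have hmem : x + t • u ∈ K := by
            apply hball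
            rw [dist_eq_norm]
            have e : x + t • u - x = t • u := by abel
            rw [e, norm_smul, hu1, mul_one, Real.norm_eq_abs, abs_of_nonneg ht]
            exact htd
          have := hsup _ hmem
          rw [inner_add_left, real_inner_smul_left, real_inner_self_eq_norm_sq, hu1] at this
          nlinarith
        by_contra hcon
        push_neg at hcon
        have hg0 : ⟪x, u⟫ ≤ ⟪y, u⟫ := hsup x hx
        set t := (⟪y, u⟫ - ⟪x, u⟫ + d) / 2 with htdef
        have h1 : 0 ≤ t := by rw [htdef]; linarith
        have h2 : t < d := by rw [htdef]; linarith
        have := hstep t h1 h2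
        rw [htdef] at this
        linarith
      have hxy : x - y = -(d • u) := by
        apply cs_eq hu1 hd0
        · rw [← dist_eq_norm, hyd]
        · rw [inner_sub_left]; linarith
      obtain ⟨c, hyc, hcK⟩ := hsl y hyF
      have hcy : c - y = -(ε • u) := by
        apply cs_eq hu1 hε.le
        · rw [← dist_eq_norm, dist_comm]
          exact mem_closedBall.1 hyc
        · have hmem : c + ε • u ∈ K := hcK (by
            rw [mem_closedBall_iff_norm]
            have e : c + ε • u - c = ε • u := by abel
            rw [e, norm_smul, hu1, mul_one, Real.norm_eq_abs, abs_of_nonneg hε.le])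
          have := hsup _ hmem
          rw [inner_add_left, real_inner_smul_left, real_inner_self_eq_norm_sq, hu1] at this
          rw [inner_sub_left]
          nlinarith
      refine ⟨c, hcK, x - c, ?_, by module⟩
      rw [mem_closedBall_zero_iff]
      have e : x - c = (x - y) - (c - y) := by abel
      rw [e, hxy, hcy]
      have e2 : -(d • u) - -(ε • u) = (ε - d) • u := by module
      rw [e2, norm_smul, hu1, mul_one, Real.norm_eq_abs, abs_of_nonneg (by linarith)]
      linarith
  · -- L + ball ⊆ K
    rintro _ ⟨c, hc, b, hb, rfl⟩
    exact hc (by rw [mem_closedBall_iff_norm]; simpa using mem_closedBall_zero_iff.1 hb)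

/-! ### Directions determined by pairs of points of `S` -/

def V0 (S : Set E2) : Set E2 :=
  {u : E2 | ‖u‖ = 1 ∧ ∃ s ∈ S, ∃ s' ∈ S, s ≠ s' ∧ ⟪s - s', u⟫ = 0}

lemma V0_finite {S : Set E2} (hS : S.Finite) : (V0 S).Finite := by
  have hbig : V0 S ⊆ ⋃ p ∈ S ×ˢ S,
      {(‖p.1 - p.2‖⁻¹ • J (p.1 - p.2)), -(‖p.1 - p.2‖⁻¹ • J (p.1 - p.2))} := by
    rintro u ⟨hu1, s, hs, s', hs', hne, horth⟩
    have hw : s - s' ≠ 0 := sub_ne_zero.2 hne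
    obtain ⟨t, ht⟩ := ortho2 hw horth
    have hwn : (0:ℝ) < ‖s - s'‖ := norm_pos_iff.2 hw
    have habs : |t| = ‖s - s'‖⁻¹ := by
      have h2 : ‖u‖ = |t| * ‖s - s'‖ := by
        rw [ht, norm_smul, norm_J, Real.norm_eq_abs]
      rw [hu1] at h2
      field_simp
      linarith [h2]
    apply Set.mem_biUnion (Set.mk_mem_prod hs hs')
    rcases abs_eq (by positivity : (0:ℝ) ≤ ‖s - s'‖⁻¹) |>.1 habs with h | h
    · left
      rw [ht, h]
    · right
      rw [ht, h]
      show (-(‖s - s'‖⁻¹)) • J (s - s') = _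
      module
  exact ((hS.prod hS).biUnion fun p _ => (Set.finite_singleton _).insert _).subset hbig

section coreaux

variable {S : Set E2} {ε : ℝ}

/-- The normal direction at a point of `B \ (C ∪ A)` is orthogonal to a pair of points of `S`. -/
lemma nu_mem_V0 (hS : S.Finite) (hSne : S.Nonempty) (hε : 0 < ε) {y : E2}
    (hyB : y ∈ convexHull ℝ S + closedBall (0 : E2) ε) (hyC : y ∉ convexHull ℝ S)
    (hyA : y ∉ S + closedBall (0 : E2) ε) :
    (infDist y (convexHull ℝ S))⁻¹ • (y - pp (convexHull ℝ S) y) ∈ V0 S := by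
  classical
  set C := convexHull ℝ S with hC
  have hCcl : IsClosed C := (hS.isCompact_convexHull ℝ).isClosed
  have hCco : Convex ℝ C := convex_convexHull ℝ S
  have hCne : C.Nonempty := hSne.mono (subset_convexHull ℝ S)
  set dz := infDist y C with hdz
  have hdzpos : 0 < dz := infDist_pos_of_not_mem hCne hCcl hCco hyC
  set ν := dz⁻¹ • (y - pp C y) with hν
  have hrepν : y - pp C y = dz • ν := by
    rw [hν, smul_smul, mul_inv_cancel₀ hdzpos.ne', one_smul]
  have hν1 : ‖ν‖ = 1 := by
    rw [hν, norm_smul, Real.norm_eq_abs, abs_of_pos (by positivity),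
      pp_dist hCne hCcl hCco, ← hdz]
    field_simp
  have hsupν : ∀ c ∈ C, ⟪c, ν⟫ ≤ ⟪pp C y, ν⟫ := by
    intro c hc
    have h1 := pp_inner hCne hCcl hCco y c hc
    rw [hrepν, real_inner_smul_left] at h1
    have h2 : ⟪ν, c - pp C y⟫ ≤ 0 := by nlinarith
    rw [inner_sub_right] at h2
    linarith [real_inner_comm c ν, real_inner_comm (pp C y) ν, h2]
  refine ⟨hν1, ?_⟩
  set F := hS.toFinset with hF
  have hppC : pp C y ∈ convexHull ℝ (F : Set E2) := by
    rw [hF, hS.coe_toFinset]; exact pp_mem hCne hCcl hCco y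
  obtain ⟨w, hw0, hw1, hwz⟩ := Finset.mem_convexHull'.1 hppC
  have hterm0 : ∀ s ∈ F, w s * ⟪pp C y - s, ν⟫ = 0 := by
    have hsum : ∑ s ∈ F, w s * ⟪pp C y - s, ν⟫ = 0 := by
      have e1 : ∀ s ∈ F, w s * ⟪pp C y - s, ν⟫ = w s * ⟪pp C y, ν⟫ - ⟪w s • s, ν⟫ := by
        intro s _
        rw [inner_sub_left, real_inner_smul_left]
        ring
      rw [Finset.sum_congr rfl e1, Finset.sum_sub_distrib, ← Finset.sum_mul, ← sum_inner, hw1,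
        hwz, one_mul, sub_self]
    intro s hs
    refine (Finset.sum_eq_zero_iff_of_nonneg fun i hi => ?_).1 hsum s hs
    have h1 : (0:ℝ) ≤ ⟪pp C y - i, ν⟫ := by
      have := hsupν i (subset_convexHull ℝ S (hS.mem_toFinset.1 hi))
      rw [inner_sub_left]; linarith
    exact mul_nonneg (hw0 i hi) h1
  have hex : ∃ s ∈ F, 0 < w s := by
    by_contra hno
    push_neg at hno
    have : ∑ s ∈ F, w s = 0 :=
      Finset.sum_eq_zero fun s hs => le_antisymm (hno s hs) (hw0 s hs)
    rw [hw1] at this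
    exact one_ne_zero this
  by_cases htwo : ∃ s ∈ F, ∃ s' ∈ F, w s ≠ 0 ∧ w s' ≠ 0 ∧ s ≠ s'
  · obtain ⟨s, hs, s', hs', hws, hws', hne⟩ := htwo
    have h1 : ⟪pp C y - s, ν⟫ = 0 := by
      rcases mul_eq_zero.1 (hterm0 s hs) with h | h
      · exact absurd h hws
      · exact h
    have h2 : ⟪pp C y - s', ν⟫ = 0 := by
      rcases mul_eq_zero.1 (hterm0 s' hs') with h | h
      · exact absurd h hws'
      · exact h
    refine ⟨s, hS.mem_toFinset.1 hs, s', hS.mem_toFinset.1 hs', hne, ?_⟩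
    have e : s - s' = (pp C y - s') - (pp C y - s) := by abel
    rw [e, inner_sub_left, h1, h2, sub_zero]
  · push_neg at htwo
    obtain ⟨s₀, hs₀, hw₀⟩ := hex
    have hwb : ∀ b ∈ F, b ≠ s₀ → w b = 0 := by
      intro b hb hbne
      by_contra h
      exact hbne (htwo b hb s₀ hs₀ h hw₀.ne')
    have hpp : pp C y = s₀ := by
      have e1 : ∑ s ∈ F, w s • s = w s₀ • s₀ :=
        Finset.sum_eq_single s₀ (fun b hb hbne => by rw [hwb b hb hbne, zero_smul])
          (fun h => absurd hs₀ h)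
      have e2 : ∑ s ∈ F, w s = w s₀ :=
        Finset.sum_eq_single s₀ (fun b hb hbne => hwb b hb hbne) (fun h => absurd hs₀ h)
      rw [e1] at hwz
      rw [e2] at hw1
      rw [hw1, one_smul] at hwz
      exact hwz.symm
    exfalso
    apply hyA
    refine ⟨s₀, hS.mem_toFinset.1 hs₀, y - s₀, ?_, by module⟩
    rw [mem_closedBall_zero_iff]
    have e3 : ‖y - s₀‖ = dz := by
      rw [← hpp, hdz]; exact pp_dist hCne hCcl hCco y
    rw [e3, hdz]
    exact (mem_add_cball_iff hCne hCcl hCco hε.le y).1 hyB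

/-- The normal direction is constant on a convex subset of `B \ (C ∪ A)`. -/
lemma nu_const (hS : S.Finite) (hSne : S.Nonempty) (hε : 0 < ε) {P : Set E2}
    (hPco : Convex ℝ P) (hPne : P.Nonempty)
    (hPsub : P ⊆ {y | y ∈ convexHull ℝ S + closedBall (0 : E2) ε ∧ y ∉ convexHull ℝ S ∧
      y ∉ S + closedBall (0 : E2) ε}) :
    ∃ u ∈ V0 S, ∀ z ∈ P,
      z - pp (convexHull ℝ S) z = (infDist z (convexHull ℝ S)) • u := by
  classical
  set C := convexHull ℝ S with hC
  have hCcl : IsClosed C := (hS.isCompact_convexHull ℝ).isClosed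
  have hCco : Convex ℝ C := convex_convexHull ℝ S
  have hCne : C.Nonempty := hSne.mono (subset_convexHull ℝ S)
  set g : E2 → E2 := fun z => (infDist z C)⁻¹ • (z - pp C z) with hg
  have hgP : ∀ z ∈ P, g z ∈ V0 S := fun z hz =>
    nu_mem_V0 hS hSne hε (hPsub hz).1 (hPsub hz).2.1 (hPsub hz).2.2
  have hgcont : ContinuousOn g P := by
    apply ContinuousOn.fun_smul
    · apply ContinuousOn.inv₀
      · exact (continuous_infDist_pt C).continuousOn
      · intro z hz
        exact (infDist_pos_of_not_mem hCne hCcl hCco (hPsub hz).2.1).ne'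
    · exact (continuous_id.sub (pp_cont hCne hCcl hCco)).continuousOn
  have himg : (g '' P).Subsingleton :=
    finprec (hPco.isPreconnected.image g hgcont) (V0_finite hS)
      (by rintro _ ⟨z, hz, rfl⟩; exact hgP z hz)
  obtain ⟨q, hq⟩ := hPne
  refine ⟨g q, hgP q hq, fun z hz => ?_⟩
  have he : g z = g q := himg (Set.mem_image_of_mem g hz) (Set.mem_image_of_mem g hq)
  have hdzpos : 0 < infDist z C :=
    infDist_pos_of_not_mem hCne hCcl hCco (hPsub hz).2.1
  calc z - pp C z = (infDist z C) • g z := by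
        rw [hg, smul_smul, mul_inv_cancel₀ hdzpos.ne', one_smul]
  _ = (infDist z C) • g q := by rw [he]

/-- Segments between points of `{x} - L` stay in `{x} - L`. -/
lemma seg_sub_trans {x : E2} {L : Set E2} (hL : Convex ℝ L) {l₁ l₂ : E2} (h1 : l₁ ∈ L)
    (h2 : l₂ ∈ L) : segment ℝ (x - l₁) (x - l₂) ⊆ ({x} : Set E2) - L := by
  intro z hz
  rw [segment_eq_image'] at hz
  obtain ⟨t, ht, rfl⟩ := hz
  have hl : (1 - t) • l₁ + t • l₂ ∈ L := hL h1 h2 (by linarith [ht.2]) ht.1 (by ring)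
  rw [Set.mem_sub]
  refine ⟨x, rfl, (1 - t) • l₁ + t • l₂, hl, by module⟩

end coreaux

/-! ### The core measure inequality -/

set_option maxHeartbeats 1000000 in
lemma core {S : Set E2} {ε : ℝ} (hε : 0 < ε) (hS : S.Finite) (hSne : S.Nonempty)
    (hdiam : Metric.diam S ≤ 2 * ε) {L : Set E2} (hLc : IsCompact L) (hLco : Convex ℝ L)
    (hLne : L.Nonempty) :
    volume (convexHull ℝ S + closedBall (0 : E2) ε + L) + volume (S + closedBall (0 : E2) ε)
      ≤ volume (S + closedBall (0 : E2) ε + L) + volume (convexHull ℝ S + closedBall (0 : E2) ε) := by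
  classical
  set C := convexHull ℝ S with hC
  have hCcl : IsClosed C := (hS.isCompact_convexHull ℝ).isClosed
  have hCco : Convex ℝ C := convex_convexHull ℝ S
  have hCne : C.Nonempty := hSne.mono (subset_convexHull ℝ S)
  have hCcomp : IsCompact C := hS.isCompact_convexHull ℝ
  set Bb := closedBall (0 : E2) ε with hBb
  set A := S + Bb with hA
  set B := C + Bb with hB
  have hBcomp : IsCompact B := hCcomp.add (isCompact_closedBall _ _)
  have hBcl : IsClosed B := hBcomp.isClosed
  have hBco : Convex ℝ B := hCco.add (convex_closedBall _ _)
  have hAcomp : IsCompact A := hS.isCompact.add (isCompact_closedBall _ _)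
  have hAB : A ⊆ B := Set.add_subset_add_right (subset_convexHull ℝ S)
  have hCB : C ⊆ B := fun c hc => ⟨c, hc, 0, mem_closedBall_self hε.le, add_zero c⟩
  have hfr : frontier C ⊆ A := frontier_hull_sub hS hSne hdiam hε
  -- the open approximation N of B + L
  set N := interior B + L with hN
  have hNopen : IsOpen N := isOpen_interior.add_right
  have hNco : Convex ℝ N := hBco.interior.add hLco
  have hBsubN : B + L ⊆ closure N := by
    rintro _ ⟨b, hb, l, hl, rfl⟩
    obtain ⟨c, hc, e, he, rfl⟩ := hb
    rw [mem_closedBall_zero_iff] at he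
    apply mem_closure_iff_seq_limit.2
    refine ⟨fun n => c + (1 - 1/((n:ℝ)+1)) • e + l, fun n => ?_, ?_⟩
    · have hn1 : (0:ℝ) < 1/(n+1) := by positivity
      have hn2 : 1/((n:ℝ)+1) ≤ 1 := by
        rw [div_le_one (by positivity)]
        linarith [(Nat.cast_nonneg n : (0:ℝ) ≤ n)]
      have hce : c + (1 - 1/((n:ℝ)+1)) • e ∈ C + ball (0:E2) ε := by
        refine ⟨c, hc, (1 - 1/((n:ℝ)+1)) • e, ?_, rfl⟩
        rw [mem_ball_zero_iff, norm_smul, Real.norm_eq_abs, abs_of_nonneg (by linarith)]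
        nlinarith
      have hsub : C + ball (0:E2) ε ⊆ interior B :=
        interior_maximal (Set.add_subset_add_left ball_subset_closedBall) isOpen_ball.add_left
      exact ⟨_, hsub hce, l, hl, rfl⟩
    · have heq : ∀ n : ℕ, c + (1 - 1/((n:ℝ)+1)) • e + l
          = (c + e + l) - (1/((n:ℝ)+1)) • e := fun n => by module
      simp only [heq]
      have h0 : Filter.Tendsto (fun n : ℕ => (1/((n:ℝ)+1)) • e) Filter.atTop (nhds (0:E2)) := by
        have h1 : Filter.Tendsto (fun n : ℕ => 1/((n:ℝ)+1)) Filter.atTop (nhds 0) :=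
          tendsto_one_div_add_atTop_nhds_zero_nat
        simpa using h1.smul_const e
      simpa [one_div] using (tendsto_const_nhds (x := c + e + l)).sub h0
  have hmeas1 : volume (B + L) ≤ volume N := by
    have h1 : B + L ⊆ N ∪ (closure N \ N) := by
      intro z hz
      by_cases h : z ∈ N
      · exact Or.inl h
      · exact Or.inr ⟨hBsubN hz, h⟩
    have h0 : volume (closure N \ N) = 0 := by
      rw [← hNopen.frontier_eq]
      exact hNco.addHaar_frontier volume
    calc volume (B + L) ≤ volume (N ∪ (closure N \ N)) := measure_mono h1
    _ ≤ volume N + volume (closure N \ N) := measure_union_le _ _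
    _ = volume N := by rw [h0, add_zero]
  set T' := N \ (A + L) with hT'
  have hmeas2 : volume N ≤ volume (A + L) + volume T' := by
    refine le_trans (measure_mono fun z hz => ?_) (measure_union_le _ _)
    by_cases h : z ∈ A + L
    · exact Or.inl h
    · exact Or.inr ⟨hz, h⟩
  -- support points of L
  have htau : ∀ u : E2, ∃ τ ∈ L, ∀ l ∈ L, ⟪l, u⟫ ≤ ⟪τ, u⟫ := by
    intro u
    obtain ⟨τ, hτ, hmax⟩ := hLc.exists_isMaxOn hLne
      (show ContinuousOn (fun l : E2 => ⟪l, u⟫) L from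
        (continuous_id.inner continuous_const).continuousOn)
    exact ⟨τ, hτ, fun l hl => isMaxOn_iff.1 hmax l hl⟩
  choose tau htauL htauMax using htau
  obtain ⟨τ₀, hτ₀⟩ := id hLne
  -- target pieces
  set Y : E2 → Set E2 := fun u =>
    {y | y ∈ B ∧ y ∉ C ∧ y ∉ A ∧ y - pp C y = (infDist y C) • u} with hY
  set TIN := {x ∈ T' | ∀ l ∈ L, x - l ∈ C} with hTIN
  set TU : E2 → Set E2 := fun u => T' ∩ (fun x => x - tau u) ⁻¹' (Y u) with hTU
  have havoid : ∀ x ∈ T', ∀ l ∈ L, x - l ∉ A := by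
    rintro x ⟨hxN, hxAL⟩ l hl hmem
    exact hxAL ⟨x - l, hmem, l, hl, by module⟩
  -- THE COVER
  have hcover : T' ⊆ TIN ∪ ⋃ u ∈ V0 S, TU u := by
    intro x hxT'
    obtain ⟨hxN, hxAL⟩ := id hxT'
    obtain ⟨q, hqint, l₀, hl₀, hxql⟩ := hxN
    have hq : q = x - l₀ := by rw [← hxql]; module
    rw [hq] at hqint
    by_cases hIN : ∃ l ∈ L, x - l ∈ C
    · left
      refine ⟨hxT', fun l hl => ?_⟩
      obtain ⟨l₁, hl₁, hl₁C⟩ := hIN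
      by_contra hnotC
      obtain ⟨z, hzseg, hzf⟩ := cross hCcl hl₁C hnotC
      have hzmem : z ∈ ({x} : Set E2) - L := seg_sub_trans hLco hl₁ hl hzseg
      obtain ⟨xx, hxx, l₂, hl₂, hzeq⟩ := Set.mem_sub.1 hzmem
      rw [Set.mem_singleton_iff] at hxx
      rw [hxx] at hzeq
      exact havoid x hxT' l₂ hl₂ (by rw [hzeq]; exact hfr hzf)
    · right
      push_neg at hIN
      set P := (({x} : Set E2) - L) ∩ B with hP
      have hPco : Convex ℝ P := ((convex_singleton x).sub hLco).inter hBco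
      have hmemxL : ∀ l ∈ L, x - l ∈ ({x} : Set E2) - L := fun l hl =>
        Set.mem_sub.2 ⟨x, rfl, l, hl, rfl⟩
      have hPq : x - l₀ ∈ P := ⟨hmemxL l₀ hl₀, interior_subset hqint⟩
      have hPsub : P ⊆ {y | y ∈ B ∧ y ∉ C ∧ y ∉ A} := by
        rintro p ⟨hp1, hp2⟩
        obtain ⟨xx, hxx, l, hl, hpeq⟩ := Set.mem_sub.1 hp1
        rw [Set.mem_singleton_iff] at hxx
        rw [hxx] at hpeq
        subst hpeq
        exact ⟨hp2, hIN l hl, havoid x hxT' l hl⟩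
      obtain ⟨u, huV0, hcon⟩ := nu_const hS hSne hε hPco ⟨_, hPq⟩ hPsub
      have hu1 : ‖u‖ = 1 := huV0.1
      set y := x - tau u with hy
      have hymin : ∀ l ∈ L, ⟪y, u⟫ ≤ ⟪x - l, u⟫ := by
        intro l hl
        rw [hy, inner_sub_left, inner_sub_left]
        linarith [htauMax u l hl]
      have hyB : y ∈ B := by
        by_contra hyBn
        obtain ⟨z, hzseg, hzf⟩ := cross hBcl (interior_subset hqint) hyBn
        have hzmem : z ∈ ({x} : Set E2) - L := seg_sub_trans hLco hl₀ (htauL u) hzseg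
        have hzB : z ∈ B := hBcl.frontier_subset hzf
        have hzP : z ∈ P := ⟨hzmem, hzB⟩
        have hzd : infDist z C = ε := by
          have hle : infDist z C ≤ ε := (mem_add_cball_iff hCne hCcl hCco hε.le z).1 hzB
          by_contra hnee
          have hlt : infDist z C < ε := lt_of_le_of_ne hle hnee
          have hsub2 : {p : E2 | infDist p C < ε} ⊆ interior B :=
            interior_maximal (fun p hp => (mem_add_cball_iff hCne hCcl hCco hε.le p).2 hp.le)
              (isOpen_lt (continuous_infDist_pt C) continuous_const)
          exact hzf.2 (hsub2 hlt)
        have hrep := hcon z hzP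
        rw [hzd] at hrep
        have hsupz : ∀ c ∈ C, ⟪c, u⟫ ≤ ⟪pp C z, u⟫ := by
          intro c hc
          have h1 := pp_inner hCne hCcl hCco z c hc
          rw [hrep, real_inner_smul_left] at h1
          have h2 : ⟪u, c - pp C z⟫ ≤ 0 := by nlinarith
          rw [inner_sub_right] at h2
          linarith [real_inner_comm c u, real_inner_comm (pp C z) u, h2]
        obtain ⟨δ, hδpos, hδsub⟩ := Metric.isOpen_iff.1 isOpen_interior _ hqint
        have hqmem : (x - l₀) + (δ/2) • u ∈ B := by
          apply interior_subset
          apply hδsub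
          rw [mem_ball_iff_norm]
          have e1 : (x - l₀) + (δ/2) • u - (x - l₀) = (δ/2) • u := by abel
          rw [e1, norm_smul, hu1, mul_one, Real.norm_eq_abs, abs_of_pos (by positivity)]
          linarith
        obtain ⟨c', hc', e', he', hq'⟩ := hqmem
        have hqlt : ⟪x - l₀, u⟫ < ε + ⟪pp C z, u⟫ := by
          have h1 : ⟪c', u⟫ + ⟪e', u⟫ = ⟪x - l₀, u⟫ + δ/2 := by
            have := congrArg (fun v : E2 => ⟪v, u⟫) hq'
            simp only [inner_add_left, real_inner_smul_left] at this
            rw [real_inner_self_eq_norm_sq, hu1] at this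
            linarith [this]
          have h2 : ⟪e', u⟫ ≤ ε := by
            calc ⟪e', u⟫ ≤ ‖e'‖ * ‖u‖ := real_inner_le_norm _ _
            _ ≤ ε := by rw [hu1, mul_one]; exact mem_closedBall_zero_iff.1 he'
          have h3 := hsupz c' hc'
          linarith
        have hzval : ⟪z, u⟫ = ⟪pp C z, u⟫ + ε := by
          have hz2 : z = pp C z + ε • u := by linear_combination (norm := module) hrep
          conv_lhs => rw [hz2]
          rw [inner_add_left, real_inner_smul_left, real_inner_self_eq_norm_sq, hu1]
          ring
        have hzle : ⟪z, u⟫ ≤ ⟪x - l₀, u⟫ := by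
          rw [segment_eq_image'] at hzseg
          obtain ⟨t, ht, hteq⟩ := hzseg
          have h4 := hymin l₀ hl₀
          rw [← hteq]
          simp only [inner_add_left, real_inner_smul_left, inner_sub_left] at h4 ⊢
          nlinarith [ht.1, ht.2, h4, mul_nonneg ht.1 (sub_nonneg.2 h4)]
        linarith
      have hyP : y ∈ P := ⟨hmemxL (tau u) (htauL u), hyB⟩
      refine Set.mem_biUnion huV0 ⟨hxT', ?_⟩
      show y ∈ Y u
      exact ⟨hyB, (hPsub hyP).2.1, (hPsub hyP).2.2, hcon y hyP⟩
  -- measurability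
  have hppcont := pp_cont hCne hCcl hCco
  have hYmeas : ∀ u : E2, MeasurableSet (Y u) := by
    intro u
    have heq : Y u = (B ∩ Cᶜ) ∩ (Aᶜ ∩ {y | y - pp C y - (infDist y C) • u = 0}) := by
      ext p
      simp only [hY, Set.mem_setOf_eq, Set.mem_inter_iff, Set.mem_compl_iff, sub_eq_zero]
      tauto
    rw [heq]
    refine ((hBcl.measurableSet.inter hCcl.isOpen_compl.measurableSet)).inter
      ((hAcomp.isClosed.isOpen_compl.measurableSet).inter ?_)
    refine (isClosed_eq ?_ continuous_const).measurableSet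
    exact (continuous_id.sub hppcont).sub ((continuous_infDist_pt C).smul continuous_const)
  have hYsub : ∀ u : E2, Y u ⊆ B \ A := fun u p hp => ⟨hp.1, hp.2.2.1⟩
  have hCAmeas : MeasurableSet (C \ A) :=
    hCcl.measurableSet.diff hAcomp.isClosed.measurableSet
  set F0 := (V0_finite hS).toFinset with hF0
  have hcov2 : T' ⊆ TIN ∪ ⋃ u ∈ F0, TU u := by
    intro x hx
    rcases hcover hx with h | h
    · exact Or.inl h
    · right
      obtain ⟨u, hu, hxu⟩ := Set.mem_iUnion₂.1 h
      exact Set.mem_biUnion ((V0_finite hS).mem_toFinset.2 hu) hxu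
  have hTINsub : TIN ⊆ (fun x => -τ₀ + x) ⁻¹' (C \ A) := by
    rintro x ⟨hxT, hxl⟩
    have he : -τ₀ + x = x - τ₀ := by abel
    rw [Set.mem_preimage, he]
    exact ⟨hxl τ₀ hτ₀, havoid x hxT τ₀ hτ₀⟩
  have hTUsub : ∀ u : E2, TU u ⊆ (fun x => -(tau u) + x) ⁻¹' (Y u) := by
    rintro u x ⟨hxT, hxu⟩
    have he : -(tau u) + x = x - tau u := by abel
    rw [Set.mem_preimage, he]
    exact hxu
  have hdisjY : (↑F0 : Set E2).PairwiseDisjoint Y := by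
    intro u hu v hv huv
    rw [Function.onFun, Set.disjoint_left]
    intro p hpu hpv
    apply huv
    have h1 := hpu.2.2.2
    have h2 := hpv.2.2.2
    have hd : infDist p C ≠ 0 :=
      (infDist_pos_of_not_mem hCne hCcl hCco hpu.2.1).ne'
    have := h1.symm.trans h2
    exact smul_right_injective E2 hd this
  have hdisjCA : Disjoint (C \ A) (⋃ u ∈ F0, Y u) := by
    rw [Set.disjoint_left]
    rintro p hp hpY
    obtain ⟨u, hu, hpu⟩ := Set.mem_iUnion₂.1 hpY
    exact hpu.2.1 hp.1
  have hmain : volume T' ≤ volume (B \ A) := by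
    calc volume T' ≤ volume (TIN ∪ ⋃ u ∈ F0, TU u) := measure_mono hcov2
    _ ≤ volume TIN + volume (⋃ u ∈ F0, TU u) := measure_union_le _ _
    _ ≤ volume TIN + ∑ u ∈ F0, volume (TU u) :=
        add_le_add_right (measure_biUnion_finset_le _ _) _
    _ ≤ volume (C \ A) + ∑ u ∈ F0, volume (Y u) := by
        apply add_le_add
        · calc volume TIN ≤ volume ((fun x => -τ₀ + x) ⁻¹' (C \ A)) := measure_mono hTINsub
          _ = volume (C \ A) := measure_preimage_add volume _ _
        · apply Finset.sum_le_sum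
          intro u _
          calc volume (TU u) ≤ volume ((fun x => -(tau u) + x) ⁻¹' (Y u)) :=
              measure_mono (hTUsub u)
          _ = volume (Y u) := measure_preimage_add volume _ _
    _ = volume ((C \ A) ∪ ⋃ u ∈ F0, Y u) := by
        rw [measure_union hdisjCA (F0.measurableSet_biUnion fun u _ => hYmeas u),
          measure_biUnion_finset hdisjY fun u _ => hYmeas u]
    _ ≤ volume (B \ A) := by
        apply measure_mono
        rintro p (hp | hp)
        · exact ⟨hCB hp.1, hp.2⟩
        · obtain ⟨u, hu, hpu⟩ := Set.mem_iUnion₂.1 hp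
          exact hYsub u hpu
  have hBA : volume (B \ A) + volume A = volume B := by
    rw [← measure_union disjoint_sdiff_left hAcomp.isClosed.measurableSet,
      Set.diff_union_self, Set.union_eq_self_of_subset_right hAB]
  calc volume (B + L) + volume A ≤ volume N + volume A := add_le_add_left hmeas1 _
  _ ≤ (volume (A + L) + volume T') + volume A := add_le_add_left hmeas2 _
  _ ≤ (volume (A + L) + volume (B \ A)) + volume A := by
      apply add_le_add_left
      exact add_le_add_right hmain _
  _ = volume (A + L) + volume B := by rw [add_assoc, hBA]

end L1aux

/-- Lemma 1 of the paper: for a finite set `S` of diameter at most `2ε` and a nonempty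
compact convex set `K` in which a ball of radius `ε` slides freely,
`V₂(conv S ⊕ K) − V₂(S ⊕ K) ≤ V₂(conv S ⊕ B(ε)) − V₂(S ⊕ B(ε))`. -/
theorem stmt_0 (ε : ℝ) (hε : 0 < ε)
    (S : Set E2) (hSne : S.Nonempty) (hSfin : S.Finite) (hSdiam : Metric.diam S ≤ 2 * ε)
    (K : Set E2) (hKne : K.Nonempty) (hKcomp : IsCompact K) (hKconv : Convex ℝ K)
    (hKslide : SlidesFreely ε K) :
    V2 (convexHull ℝ S + K) - V2 (S + K) ≤
      V2 (convexHull ℝ S + closedBall (0 : E2) ε) - V2 (S + closedBall (0 : E2) ε) := by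
  classical
  obtain ⟨hKeq, hLne, hLco, hLc⟩ := L1aux.Kdecomp hε hKne hKcomp hKconv hKslide
  set L := L1aux.icore K ε with hL
  set Bb := closedBall (0 : E2) ε with hBb
  have hCK : convexHull ℝ S + K = convexHull ℝ S + Bb + L := by
    rw [hKeq]; rw [add_comm L Bb, ← add_assoc]
  have hSK : S + K = S + Bb + L := by
    rw [hKeq]; rw [add_comm L Bb, ← add_assoc]
  have hcore := L1aux.core hε hSfin hSne hSdiam hLc hLco hLne
  rw [← hCK, ← hSK] at hcore
  -- finiteness
  have hcb : IsCompact Bb := isCompact_closedBall _ _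
  have hCc : IsCompact (convexHull ℝ S) := hSfin.isCompact_convexHull ℝ
  have hSc : IsCompact S := hSfin.isCompact
  have f1 : volume (convexHull ℝ S + K) ≠ ⊤ := (hCc.add hKcomp).measure_ne_top
  have f2 : volume (S + K) ≠ ⊤ := (hSc.add hKcomp).measure_ne_top
  have f3 : volume (convexHull ℝ S + Bb) ≠ ⊤ := (hCc.add hcb).measure_ne_top
  have f4 : volume (S + Bb) ≠ ⊤ := (hSc.add hcb).measure_ne_top
  unfold V2
  have h := (ENNReal.toReal_le_toReal (by finiteness) (by finiteness)).2 hcore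
  rw [ENNReal.toReal_add f1 f4, ENNReal.toReal_add f2 f3] at h
  linarith

end
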